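/- Let ρ_{AC} be a positive definite density matrix on a finite-dimensional bipartite Hilbert space ℋ_A ⊗ ℋ_C, with reduced density matrices ρ_A and ρ_C obtained by partial trace over ℋ_C and ℋ_A respectively. Then for every q > 1, D̂_q(ρ_{AC}‖ρ_A ⊗ ρ_C) ≤ ‖(ρ_A⁻¹ ⊗ ρ_C⁻¹)ρ_{AC} − 1‖, and also D̂(ρ_{AC}‖ρ_A ⊗ ρ_C) ≤ ‖(ρ_A⁻¹ ⊗ ρ_C⁻¹)ρ_{AC} − 1‖, where ‖·‖ is the operator norm. -/

import Mathlib

open scoped Kronecker ComplexOrder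

namespace QIT

variable {n : Type*} [Fintype n] [DecidableEq n]

/-- Operator norm of a matrix, i.e. the norm of the induced operator on Euclidean space. -/
noncomputable def opNorm (M : Matrix n n ℂ) : ℝ :=
  ‖Matrix.toEuclideanCLM (𝕜 := ℂ) M‖

/-- Functional calculus for Hermitian matrices (junk value `0` on non-Hermitian inputs). -/
noncomputable def matCfc (f : ℝ → ℝ) (M : Matrix n n ℂ) : Matrix n n ℂ :=
  if hM : M.IsHermitian then
    (hM.eigenvectorUnitary : Matrix n n ℂ) *
      Matrix.diagonal (fun i => (f (hM.eigenvalues i) : ℂ)) *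
      star (hM.eigenvectorUnitary : Matrix n n ℂ)
  else 0

/-- Matrix logarithm via the functional calculus. -/
noncomputable def mlog (M : Matrix n n ℂ) : Matrix n n ℂ := matCfc Real.log M

/-- Real powers of a matrix via the functional calculus. -/
noncomputable def mpow (M : Matrix n n ℂ) (q : ℝ) : Matrix n n ℂ :=
  matCfc (fun x => x ^ q) M

/-- Umegaki relative entropy `D(ρ‖σ) = Tr[ρ (log ρ - log σ)]`. -/
noncomputable def relEntropy (ρ σ : Matrix n n ℂ) : ℝ :=
  (Matrix.trace (ρ * (mlog ρ - mlog σ))).re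

/-- Belavkin-Staszewski relative entropy `D̂(ρ‖σ) = Tr[ρ log (ρ^{1/2} σ⁻¹ ρ^{1/2})]`. -/
noncomputable def bsEntropy (ρ σ : Matrix n n ℂ) : ℝ :=
  (Matrix.trace (ρ * mlog (mpow ρ (1/2) * σ⁻¹ * mpow ρ (1/2)))).re

/-- `q`-geometric Rényi divergence
`D̂_q(ρ‖σ) = (q-1)⁻¹ log Tr[σ^{1/2} (σ^{-1/2} ρ σ^{-1/2})^q σ^{1/2}]`. -/
noncomputable def geomRenyi (q : ℝ) (ρ σ : Matrix n n ℂ) : ℝ :=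
  (q - 1)⁻¹ *
    Real.log
      (Matrix.trace
        (mpow σ (1/2) * mpow (mpow σ (-(1/2)) * ρ * mpow σ (-(1/2))) q * mpow σ (1/2))).re

/-- Trace norm `‖M‖₁ = Tr ((M† M)^{1/2})`. -/
noncomputable def traceNorm (M : Matrix n n ℂ) : ℝ :=
  (((Matrix.posSemidef_conjTranspose_mul_self M).1.eigenvectorUnitary : Matrix n n ℂ) *
    Matrix.diagonal (((↑) : ℝ → ℂ) ∘ (Real.sqrt ·) ∘ (Matrix.posSemidef_conjTranspose_mul_self M).1.eigenvalues) *
    (star (Matrix.posSemidef_conjTranspose_mul_self M).1.eigenvectorUnitary : Matrix n n ℂ)).trace.re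

/-- Partial trace over the second tensor factor. -/
noncomputable def ptraceRight {a c : Type*} [Fintype a] [Fintype c]
    (M : Matrix (a × c) (a × c) ℂ) : Matrix a a ℂ :=
  fun i j => ∑ k, M (i, k) (j, k)

/-- Partial trace over the first tensor factor. -/
noncomputable def ptraceLeft {a c : Type*} [Fintype a] [Fintype c]
    (M : Matrix (a × c) (a × c) ℂ) : Matrix c c ℂ :=
  fun i j => ∑ k, M (k, i) (k, j)



section Tool
open scoped Matrix
variable {M : Matrix n n ℂ}

lemma matCfc_eq (hM : M.IsHermitian) (f : ℝ → ℝ) : matCfc f M =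
    (hM.eigenvectorUnitary : Matrix n n ℂ) *
      Matrix.diagonal (fun i => (f (hM.eigenvalues i) : ℂ)) *
      star (hM.eigenvectorUnitary : Matrix n n ℂ) :=
  dif_pos hM

lemma matCfc_mul (hM : M.IsHermitian) (f g : ℝ → ℝ) :
    matCfc f M * matCfc g M = matCfc (fun x => f x * g x) M := by
  rw [matCfc_eq hM f, matCfc_eq hM g, matCfc_eq hM]
  have h1 : star (hM.eigenvectorUnitary : Matrix n n ℂ) *
      (hM.eigenvectorUnitary : Matrix n n ℂ) = 1 :=
    Matrix.mem_unitaryGroup_iff'.mp hM.eigenvectorUnitary.2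
  simp only [Matrix.mul_assoc]
  rw [← Matrix.mul_assoc (star _) _, h1, Matrix.one_mul,
    ← Matrix.mul_assoc (Matrix.diagonal _) (Matrix.diagonal _), Matrix.diagonal_mul_diagonal]
  push_cast
  rfl

lemma matCfc_congr (hM : M.IsHermitian) {f g : ℝ → ℝ}
    (h : ∀ i, f (hM.eigenvalues i) = g (hM.eigenvalues i)) :
    matCfc f M = matCfc g M := by
  rw [matCfc_eq hM f, matCfc_eq hM g]
  have : (fun i => (f (hM.eigenvalues i) : ℂ)) = fun i => (g (hM.eigenvalues i) : ℂ) := by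
    funext i; rw [h i]
  rw [this]

lemma matCfc_one (hM : M.IsHermitian) : matCfc (fun _ => 1) M = 1 := by
  rw [matCfc_eq hM]
  have h1 : (hM.eigenvectorUnitary : Matrix n n ℂ) *
      star (hM.eigenvectorUnitary : Matrix n n ℂ) = 1 :=
    Matrix.mem_unitaryGroup_iff.mp hM.eigenvectorUnitary.2
  simp [h1]

lemma matCfc_id (hM : M.IsHermitian) : matCfc id M = M := by
  rw [matCfc_eq hM]
  exact (hM.spectral_theorem).symm

lemma matCfc_isHermitian (hM : M.IsHermitian) (f : ℝ → ℝ) : (matCfc f M).IsHermitian := by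
  rw [matCfc_eq hM]
  unfold Matrix.IsHermitian
  simp only [Matrix.star_eq_conjTranspose, Matrix.conjTranspose_mul,
    Matrix.conjTranspose_conjTranspose, Matrix.diagonal_conjTranspose]
  have : star (fun i => (f (hM.eigenvalues i) : ℂ)) = fun i => (f (hM.eigenvalues i) : ℂ) := by
    funext i
    simp [Pi.star_apply, Complex.star_def, Complex.conj_ofReal]
  rw [this, Matrix.mul_assoc]

lemma matCfc_sub (hM : M.IsHermitian) (f g : ℝ → ℝ) :
    matCfc f M - matCfc g M = matCfc (fun x => f x - g x) M := by
  rw [matCfc_eq hM f, matCfc_eq hM g, matCfc_eq hM]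
  rw [← Matrix.sub_mul, ← Matrix.mul_sub, Matrix.diagonal_sub]
  push_cast
  rfl

lemma matCfc_realSmul (hM : M.IsHermitian) (f : ℝ → ℝ) (c : ℝ) :
    (c : ℂ) • matCfc f M = matCfc (fun x => c * f x) M := by
  rw [matCfc_eq hM f, matCfc_eq hM]
  have : (c : ℂ) • Matrix.diagonal (fun i => (f (hM.eigenvalues i) : ℂ)) =
      Matrix.diagonal (fun i => ((c * f (hM.eigenvalues i) : ℝ) : ℂ)) := by
    have harg : ((c : ℂ) • fun i => (f (hM.eigenvalues i) : ℂ)) =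
        fun i => ((c * f (hM.eigenvalues i) : ℝ) : ℂ) := by
      funext i
      simp only [Pi.smul_apply, smul_eq_mul]
      push_cast
      ring
    rw [← Matrix.diagonal_smul, harg]
  rw [← Matrix.smul_mul, ← Matrix.mul_smul, this]

lemma posDef_conj {A B : Matrix n n ℂ} (hA : A.PosDef)
    (hB : ∀ x : n → ℂ, x ≠ 0 → B *ᵥ x ≠ 0) : (Bᴴ * A * B).PosDef := by
  refine Matrix.PosDef.of_dotProduct_mulVec_pos (Matrix.isHermitian_conjTranspose_mul_mul B hA.1) fun x hx => ?_
  have := hA.dotProduct_mulVec_pos (hB x hx)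
  simpa only [Matrix.star_mulVec, Matrix.dotProduct_mulVec, Matrix.vecMul_vecMul] using this

lemma mulVec_ne_zero {B : Matrix n n ℂ} (hB : IsUnit B) {x : n → ℂ} (hx : x ≠ 0) :
    B *ᵥ x ≠ 0 := by
  intro h
  apply hx
  have h1 : B⁻¹ * B = 1 := Matrix.nonsing_inv_mul B ((Matrix.isUnit_iff_isUnit_det B).mp hB)
  calc x = (B⁻¹ * B) *ᵥ x := by rw [h1, Matrix.one_mulVec]
  _ = B⁻¹ *ᵥ (B *ᵥ x) := (Matrix.mulVec_mulVec _ _ _).symm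
  _ = 0 := by rw [h, Matrix.mulVec_zero]

lemma matCfc_posSemidef {M : Matrix n n ℂ} (hM : M.IsHermitian) {f : ℝ → ℝ}
    (hf : ∀ i, 0 ≤ f (hM.eigenvalues i)) : (matCfc f M).PosSemidef := by
  rw [matCfc_eq hM]
  have hd : Matrix.PosSemidef (Matrix.diagonal (fun i => (f (hM.eigenvalues i) : ℂ))) :=
    Matrix.PosSemidef.diagonal fun i => by
      simpa using Complex.zero_le_real.mpr (hf i)
  have := Matrix.PosSemidef.mul_mul_conjTranspose_same hd (hM.eigenvectorUnitary : Matrix n n ℂ)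
  simpa [Matrix.star_eq_conjTranspose] using this

lemma matCfc_posDef {M : Matrix n n ℂ} (hM : M.IsHermitian) {f : ℝ → ℝ}
    (hf : ∀ i, 0 < f (hM.eigenvalues i)) : (matCfc f M).PosDef := by
  have hU : IsUnit (star (hM.eigenvectorUnitary : Matrix n n ℂ)) :=
    (Matrix.isUnit_iff_isUnit_det _).mpr
      (Matrix.isUnit_det_of_right_inverse (Matrix.mem_unitaryGroup_iff'.mp hM.eigenvectorUnitary.2))
  have hd : Matrix.PosDef (Matrix.diagonal (fun i => (f (hM.eigenvalues i) : ℂ))) := by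
    apply Matrix.PosDef.diagonal
    intro i
    simpa using Complex.zero_lt_real.mpr (hf i)
  have h := posDef_conj hd (fun x hx => mulVec_ne_zero hU hx)
  rw [matCfc_eq hM]
  have hUU : (star (hM.eigenvectorUnitary : Matrix n n ℂ))ᴴ =
      (hM.eigenvectorUnitary : Matrix n n ℂ) := by
    simp [Matrix.star_eq_conjTranspose]
  rwa [hUU] at h

lemma matCfc_isUnit {M : Matrix n n ℂ} (hM : M.IsHermitian) {f : ℝ → ℝ}
    (hf : ∀ i, f (hM.eigenvalues i) ≠ 0) : IsUnit (matCfc f M) := by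
  refine (Matrix.isUnit_iff_isUnit_det _).mpr
    (Matrix.isUnit_det_of_right_inverse (B := matCfc (fun x => (f x)⁻¹) M) ?_)
  rw [matCfc_mul hM]
  rw [matCfc_congr hM (g := fun _ => 1) (fun i => mul_inv_cancel₀ (hf i)), matCfc_one hM]

lemma trace_re_nonneg_of_posSemidef {A : Matrix n n ℂ} (hA : A.PosSemidef) :
    0 ≤ A.trace.re := by
  rw [Matrix.trace]
  have : ∀ i, 0 ≤ (A i i).re := by
    intro i
    have h := hA.dotProduct_mulVec_nonneg (Pi.single i 1)
    have hd : dotProduct (star (Pi.single i 1)) (A *ᵥ Pi.single i 1) = A i i := by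
      simp [Matrix.mulVec_single, dotProduct, Pi.star_apply, Pi.single_apply,
        apply_ite, Finset.sum_ite_eq]
    rw [hd] at h
    exact (Complex.le_def.mp h).1
  rw [Complex.re_sum]
  exact Finset.sum_nonneg fun i _ => this i

lemma trace_re_pos_of_posDef [Nonempty n] {A : Matrix n n ℂ} (hA : A.PosDef) :
    0 < A.trace.re := by
  rw [Matrix.trace]
  have : ∀ i, 0 < (A i i).re := by
    intro i
    have h := hA.dotProduct_mulVec_pos (x := Pi.single i 1) (fun h => one_ne_zero (α := ℂ) (by simpa using congrFun h i))
    have hd : dotProduct (star (Pi.single i 1)) (A *ᵥ Pi.single i 1) = A i i := by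
      simp [Matrix.mulVec_single, dotProduct, Pi.star_apply, Pi.single_apply,
        apply_ite, Finset.sum_ite_eq]
    rw [hd] at h
    exact (Complex.lt_def.mp h).1
  rw [Complex.re_sum]
  exact Finset.sum_pos (fun i _ => this i) Finset.univ_nonempty

lemma trace_mul_re_nonneg {A B : Matrix n n ℂ} (hA : A.PosSemidef) (hB : B.PosSemidef) :
    0 ≤ (A * B).trace.re := by
  obtain ⟨C, hC⟩ : ∃ C : Matrix n n ℂ, B = Cᴴ * C := by
    open scoped MatrixOrder in
    exact CStarAlgebra.nonneg_iff_eq_star_mul_self.mp hB.nonneg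
  have h1 : (A * B).trace = (C * A * Cᴴ).trace := by
    rw [hC, ← Matrix.mul_assoc, Matrix.trace_mul_cycle]
  rw [h1]
  exact trace_re_nonneg_of_posSemidef (Matrix.PosSemidef.mul_mul_conjTranspose_same hA C)

lemma eigenvalue_le_of_conj {Z N S : Matrix n n ℂ} (hZ : Z.IsHermitian)
    (hS : ∀ v : n → ℂ, v ≠ 0 → S *ᵥ v ≠ 0) (hrel : S * Z = (N + 1) * S) (i : n) :
    hZ.eigenvalues i ≤ 1 + opNorm N := by
  set μ : ℝ := hZ.eigenvalues i with hμ
  set v : n → ℂ := ⇑(hZ.eigenvectorBasis i) with hv'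
  have hv : v ≠ 0 := by
    have h0 := hZ.eigenvectorBasis.orthonormal.ne_zero i
    intro h
    apply h0
    ext j
    exact congrFun h j
  have hZv : Z *ᵥ v = (μ : ℂ) • v := by
    have h := hZ.mulVec_eigenvectorBasis i
    rw [← hv', ← hμ] at h
    rw [h]
    funext j
    simp [Complex.real_smul]
  set w := S *ᵥ v with hw'
  have hw : w ≠ 0 := hS v hv
  have hNw : N *ᵥ w = ((μ : ℂ) - 1) • w := by
    have h1 : (N + 1) *ᵥ w = S *ᵥ (Z *ᵥ v) := by
      rw [hw', Matrix.mulVec_mulVec, Matrix.mulVec_mulVec, ← hrel]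
    rw [hZv, Matrix.mulVec_smul, ← hw'] at h1
    have h2 : N *ᵥ w + w = (μ:ℂ) • w := by
      simpa [Matrix.add_mulVec, Matrix.one_mulVec] using h1
    rw [sub_smul, one_smul]
    exact eq_sub_of_add_eq h2
  set W : EuclideanSpace ℂ n := (WithLp.equiv 2 (n → ℂ)).symm w with hW'
  have hWne : 0 < ‖W‖ := by
    rw [norm_pos_iff]
    intro h
    apply hw
    funext j
    exact congrFun (congrArg (WithLp.equiv 2 (n → ℂ)) h) j
  have hb : ‖Matrix.toEuclideanCLM (𝕜 := ℂ) N W‖ ≤ opNorm N * ‖W‖ :=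
    (Matrix.toEuclideanCLM (𝕜 := ℂ) N).le_opNorm W
  have happ : Matrix.toEuclideanCLM (𝕜 := ℂ) N W = (WithLp.equiv 2 (n → ℂ)).symm (N *ᵥ w) := by
    rw [hW']
    rfl
  have hmul : ‖(μ:ℂ) - 1‖ * ‖W‖ ≤ opNorm N * ‖W‖ := by
    rw [happ, hNw] at hb
    have hsm : (WithLp.equiv 2 (n → ℂ)).symm (((μ:ℂ) - 1) • w) = ((μ:ℂ) - 1) • W := by
      rw [hW']
      rfl
    rwa [hsm, norm_smul] at hb
  have h3 : ‖(μ:ℂ) - 1‖ ≤ opNorm N := le_of_mul_le_mul_right hmul hWne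
  have h4 : μ - 1 ≤ ‖(μ:ℂ) - 1‖ := by
    have he : ((μ:ℂ) - 1) = ((μ - 1 : ℝ) : ℂ) := by push_cast; ring
    rw [he, Complex.norm_real]
    exact le_abs_self _
  linarith

end Tool

section Kron
open scoped Matrix
variable {a c : Type*} [Fintype a] [DecidableEq a] [Fintype c] [DecidableEq c]

lemma kronecker_conjTranspose (A : Matrix a a ℂ) (B : Matrix c c ℂ) :
    (A ⊗ₖ B)ᴴ = Aᴴ ⊗ₖ Bᴴ := by
  ext i j
  simp [Matrix.conjTranspose_apply, Matrix.kroneckerMap_apply, star_mul, mul_comm]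

lemma kronecker_posDef {A : Matrix a a ℂ} {B : Matrix c c ℂ}
    (hA : A.PosDef) (hB : B.PosDef) : (A ⊗ₖ B).PosDef := by
  exact hA.kronecker hB

lemma ptraceRight_posDef [Nonempty c] {M : Matrix (a × c) (a × c) ℂ} (hM : M.PosDef) :
    (ptraceRight M).PosDef := by
  refine Matrix.posDef_iff_dotProduct_mulVec.mpr ⟨?_, ?_⟩
  · show (ptraceRight M)ᴴ = ptraceRight M
    ext i j
    have : ∀ k : c, (star (M (j, k) (i, k)) : ℂ) = M (i, k) (j, k) := by
      intro k
      have := congrFun (congrFun hM.1 (i, k)) (j, k)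
      simpa [Matrix.conjTranspose_apply] using this
    simp only [Matrix.conjTranspose_apply, ptraceRight, star_sum]
    exact Finset.sum_congr rfl fun k _ => this k
  · intro x hx
    classical
    set y : c → (a × c) → ℂ := fun k p => if p.2 = k then x p.1 else 0 with hy
    have hR : ∀ k : c, dotProduct (star (y k)) (M *ᵥ y k) =
        ∑ i, ∑ j, star (x i) * (M (i,k) (j,k) * x j) := by
      intro k
      simp only [hy, dotProduct, Matrix.mulVec, Pi.star_apply, Fintype.sum_prod_type,
        apply_ite (star : ℂ → ℂ), star_zero, ite_mul, zero_mul, mul_ite, mul_zero,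
        Finset.sum_ite_eq', Finset.mem_univ, if_true, Finset.mul_sum]
      simp only [Finset.sum_ite_irrel, Finset.sum_const_zero, Finset.sum_ite_eq',
        Finset.mem_univ, if_true]
    have key : dotProduct (star x) (ptraceRight M *ᵥ x) =
        ∑ k : c, dotProduct (star (y k)) (M *ᵥ y k) := by
      simp only [hR]
      simp only [dotProduct, Matrix.mulVec, ptraceRight, Pi.star_apply,
        Finset.mul_sum, Finset.sum_mul]
      have h1 : ∀ x1 : a, (∑ x2 : a, ∑ i : c, star (x x1) * (M (x1,i) (x2,i) * x x2))
          = ∑ i : c, ∑ x2 : a, star (x x1) * (M (x1,i) (x2,i) * x x2) :=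
        fun _ => Finset.sum_comm
      simp_rw [h1]
      exact Finset.sum_comm
    rw [key]
    refine Finset.sum_pos (fun k _ => hM.dotProduct_mulVec_pos (x := y k) ?_) Finset.univ_nonempty
    obtain ⟨i0, hi0⟩ := Function.ne_iff.mp hx
    intro h
    apply hi0
    have := congrFun h (i0, k)
    simpa [hy] using this

lemma ptraceLeft_posDef [Nonempty a] {M : Matrix (a × c) (a × c) ℂ} (hM : M.PosDef) :
    (ptraceLeft M).PosDef := by
  refine Matrix.posDef_iff_dotProduct_mulVec.mpr ⟨?_, ?_⟩
  · show (ptraceLeft M)ᴴ = ptraceLeft M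
    ext i j
    have : ∀ k : a, (star (M (k, j) (k, i)) : ℂ) = M (k, i) (k, j) := by
      intro k
      have := congrFun (congrFun hM.1 (k, i)) (k, j)
      simpa [Matrix.conjTranspose_apply] using this
    simp only [Matrix.conjTranspose_apply, ptraceLeft, star_sum]
    exact Finset.sum_congr rfl fun k _ => this k
  · intro x hx
    classical
    set y : a → (a × c) → ℂ := fun k p => if p.1 = k then x p.2 else 0 with hy
    have hR : ∀ k : a, dotProduct (star (y k)) (M *ᵥ y k) =
        ∑ i, ∑ j, star (x i) * (M (k,i) (k,j) * x j) := by
      intro k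
      simp only [hy, dotProduct, Matrix.mulVec, Pi.star_apply, Fintype.sum_prod_type,
        apply_ite (star : ℂ → ℂ), star_zero, ite_mul, zero_mul, mul_ite, mul_zero,
        Finset.sum_ite_eq', Finset.mem_univ, if_true, Finset.mul_sum]
      simp only [Finset.sum_ite_irrel, Finset.sum_const_zero, Finset.sum_ite_eq',
        Finset.mem_univ, if_true]
    have key : dotProduct (star x) (ptraceLeft M *ᵥ x) =
        ∑ k : a, dotProduct (star (y k)) (M *ᵥ y k) := by
      simp only [hR]
      simp only [dotProduct, Matrix.mulVec, ptraceLeft, Pi.star_apply,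
        Finset.mul_sum, Finset.sum_mul]
      have h1 : ∀ x1 : c, (∑ x2 : c, ∑ i : a, star (x x1) * (M (i,x1) (i,x2) * x x2))
          = ∑ i : a, ∑ x2 : c, star (x x1) * (M (i,x1) (i,x2) * x x2) :=
        fun _ => Finset.sum_comm
      simp_rw [h1]
      exact Finset.sum_comm
    rw [key]
    refine Finset.sum_pos (fun k _ => hM.dotProduct_mulVec_pos (x := y k) ?_) Finset.univ_nonempty
    obtain ⟨i0, hi0⟩ := Function.ne_iff.mp hx
    intro h
    apply hi0
    have := congrFun h (k, i0)
    simpa [hy] using this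

end Kron

section Main
open scoped Matrix

/-- For a positive definite bipartite density matrix `ρ_{AC}` with marginals
`ρ_A`, `ρ_C`, for every `q > 1` both the `q`-geometric Rényi mutual information and the
BS-mutual information are bounded by `‖(ρ_A⁻¹ ⊗ ρ_C⁻¹) ρ_{AC} - 1‖`. -/
theorem bsMutualInfo_le_opNorm {a c : Type*} [Fintype a] [DecidableEq a]
    [Fintype c] [DecidableEq c]
    (ρAC : Matrix (a × c) (a × c) ℂ) (hρ : ρAC.PosDef) (hρtr : ρAC.trace = 1) :
    (∀ q : ℝ, 1 < q →
        geomRenyi q ρAC (ptraceRight ρAC ⊗ₖ ptraceLeft ρAC) ≤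
          opNorm ((ptraceRight ρAC)⁻¹ ⊗ₖ (ptraceLeft ρAC)⁻¹ * ρAC - 1)) ∧
      bsEntropy ρAC (ptraceRight ρAC ⊗ₖ ptraceLeft ρAC) ≤
        opNorm ((ptraceRight ρAC)⁻¹ ⊗ₖ (ptraceLeft ρAC)⁻¹ * ρAC - 1) := by
  classical
  rcases isEmpty_or_nonempty (a × c) with hemp | hne
  · rw [Matrix.trace, Finset.univ_eq_empty, Finset.sum_empty] at hρtr
    exact absurd hρtr zero_ne_one
  have hna : Nonempty a := ⟨hne.some.1⟩
  have hnc : Nonempty c := ⟨hne.some.2⟩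
  set ρA := ptraceRight ρAC with hρA
  set ρC := ptraceLeft ρAC with hρC
  have hA : ρA.PosDef := ptraceRight_posDef hρ
  have hC : ρC.PosDef := ptraceLeft_posDef hρ
  set σ := ρA ⊗ₖ ρC with hσdef
  have hσ : σ.PosDef := kronecker_posDef hA hC
  have hσh : σ.IsHermitian := hσ.1
  set N := σ⁻¹ * ρAC - 1 with hN
  have hNorm_eq : ρA⁻¹ ⊗ₖ ρC⁻¹ * ρAC - 1 = N := by
    rw [hN, hσdef, Matrix.inv_kronecker]
  set t := opNorm N with ht
  have ht0 : (0:ℝ) ≤ t := norm_nonneg _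
  have hN1 : N + 1 = σ⁻¹ * ρAC := by rw [hN, sub_add_cancel]
  set cc : ℝ := 1 + t with hccdef
  have hcc : (0:ℝ) < cc := by linarith
  have hσev : ∀ i, 0 < hσh.eigenvalues i := hσ.eigenvalues_pos
  have hρev : ∀ i, 0 < hρ.1.eigenvalues i := hρ.eigenvalues_pos
  set Sh := mpow σ (1/2) with hSh
  set Sn := mpow σ (-(1/2)) with hSn
  set Rh := mpow ρAC (1/2) with hRh
  have hShc : Sh = matCfc (fun x => x ^ ((1:ℝ)/2)) σ := rfl
  have hSnc : Sn = matCfc (fun x => x ^ (-((1:ℝ)/2))) σ := rfl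
  have hRhc : Rh = matCfc (fun x => x ^ ((1:ℝ)/2)) ρAC := rfl
  have hShh : Sh.IsHermitian := hShc ▸ matCfc_isHermitian hσh _
  have hSnh : Sn.IsHermitian := hSnc ▸ matCfc_isHermitian hσh _
  have hRhh : Rh.IsHermitian := hRhc ▸ matCfc_isHermitian hρ.1 _
  have hShpd : Sh.PosDef := by
    rw [hShc]; exact matCfc_posDef hσh fun i => Real.rpow_pos_of_pos (hσev i) _
  have hSnpd : Sn.PosDef := by
    rw [hSnc]; exact matCfc_posDef hσh fun i => Real.rpow_pos_of_pos (hσev i) _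
  have hRhpd : Rh.PosDef := by
    rw [hRhc]; exact matCfc_posDef hρ.1 fun i => Real.rpow_pos_of_pos (hρev i) _
  have hShSh : Sh * Sh = σ := by
    have h1 : matCfc (fun x => x ^ ((1:ℝ)/2) * x ^ ((1:ℝ)/2)) σ = matCfc id σ :=
      matCfc_congr hσh fun i => by
        rw [← Real.rpow_add (hσev i)]
        norm_num
    rw [hShc, matCfc_mul hσh, h1, matCfc_id hσh]
  have hRhRh : Rh * Rh = ρAC := by
    have h1 : matCfc (fun x => x ^ ((1:ℝ)/2) * x ^ ((1:ℝ)/2)) ρAC = matCfc id ρAC :=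
      matCfc_congr hρ.1 fun i => by
        rw [← Real.rpow_add (hρev i)]
        norm_num
    rw [hRhc, matCfc_mul hρ.1, h1, matCfc_id hρ.1]
  have hShSn : Sh * Sn = 1 := by
    have h1 : matCfc (fun x => x ^ ((1:ℝ)/2) * x ^ (-((1:ℝ)/2))) σ =
        matCfc (fun _ => 1) σ :=
      matCfc_congr hσh fun i => by
        rw [← Real.rpow_add (hσev i)]
        norm_num
    rw [hShc, hSnc, matCfc_mul hσh, h1, matCfc_one hσh]
  have hSnSh : Sn * Sh = 1 := by
    have h1 : matCfc (fun x => x ^ (-((1:ℝ)/2)) * x ^ ((1:ℝ)/2)) σ =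
        matCfc (fun _ => 1) σ :=
      matCfc_congr hσh fun i => by
        rw [← Real.rpow_add (hσev i)]
        norm_num
    rw [hShc, hSnc, matCfc_mul hσh, h1, matCfc_one hσh]
  have hσinv : σ⁻¹ = Sn * Sn := by
    refine Matrix.inv_eq_right_inv ?_
    have h1 : Sn * Sn = matCfc (fun x => x⁻¹) σ := by
      rw [hSnc, matCfc_mul hσh]
      refine matCfc_congr hσh fun i => ?_
      rw [← Real.rpow_add (hσev i)]
      norm_num
      rw [Real.rpow_neg_one]
    rw [h1]
    have h2 : σ * matCfc (fun x => x⁻¹) σ = matCfc (fun x => id x * x⁻¹) σ := by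
      rw [← matCfc_mul hσh, matCfc_id hσh]
    rw [h2]
    have h3 : matCfc (fun x => id x * x⁻¹) σ = matCfc (fun _ => 1) σ :=
      matCfc_congr hσh fun i => by
        simp [mul_inv_cancel₀ (hσev i).ne']
    rw [h3, matCfc_one hσh]
  have hSnU : IsUnit Sn := hSnpd.isUnit
  have hShU : IsUnit Sh := hShpd.isUnit
  have hRhU : IsUnit Rh := hRhpd.isUnit
  -- X
  set X := Sn * ρAC * Sn with hXdef
  have hX : X.PosDef := by
    have h := posDef_conj hρ (fun x hx => mulVec_ne_zero hSnU hx)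
    rwa [show Snᴴ = Sn from hSnh] at h
  have hXh : X.IsHermitian := hX.1
  have hXev : ∀ i, 0 < hXh.eigenvalues i := hX.eigenvalues_pos
  have hrelX : Sn * X = (N + 1) * Sn := by
    rw [hN1, hXdef]
    rw [show Sn * (Sn * ρAC * Sn) = Sn * Sn * ρAC * Sn by
      simp only [Matrix.mul_assoc]]
    rw [← hσinv]
  have hXle : ∀ i, hXh.eigenvalues i ≤ cc :=
    fun i => eigenvalue_le_of_conj hXh (fun v hv => mulVec_ne_zero hSnU hv) hrelX i
  -- Y
  set Y := Rh * σ⁻¹ * Rh with hYdef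
  have hY : Y.PosDef := by
    have h := posDef_conj hσ.inv (fun x hx => mulVec_ne_zero hRhU hx)
    rwa [show Rhᴴ = Rh from hRhh] at h
  have hYh : Y.IsHermitian := hY.1
  have hYev : ∀ i, 0 < hYh.eigenvalues i := hY.eigenvalues_pos
  have hrelY : (σ⁻¹ * Rh) * Y = (N + 1) * (σ⁻¹ * Rh) := by
    rw [hN1, hYdef]
    rw [show σ⁻¹ * Rh * (Rh * σ⁻¹ * Rh) = σ⁻¹ * (Rh * Rh) * σ⁻¹ * Rh by
      simp only [Matrix.mul_assoc]]
    rw [hRhRh]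
    simp only [Matrix.mul_assoc]
  have hSU : IsUnit (σ⁻¹ * Rh) := hσ.inv.isUnit.mul hRhU
  have hYle : ∀ i, hYh.eigenvalues i ≤ cc :=
    fun i => eigenvalue_le_of_conj hYh (fun v hv => mulVec_ne_zero hSU hv) hrelY i
  have hlogcc : Real.log cc ≤ t := by
    have := Real.log_le_sub_one_of_pos hcc
    linarith
  constructor
  · -- geometric Renyi part
    intro q hq
    rw [hNorm_eq, ← ht]
    set Xq := mpow X q with hXq
    have hXqc : Xq = matCfc (fun x => x ^ q) X := rfl
    set γ : ℝ := cc ^ (q - 1) with hγ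
    have h1 : (Sh * Xq * Sh).trace = (σ * Xq).trace := by
      rw [Matrix.trace_mul_cycle, hShSh]
    have hσSn : σ * Sn = Sh := by
      rw [← hShSh, Matrix.mul_assoc, hShSn, Matrix.mul_one]
    have h2 : (σ * X).trace = 1 := by
      rw [hXdef, show σ * (Sn * ρAC * Sn) = σ * Sn * ρAC * Sn by simp only [Matrix.mul_assoc],
        hσSn, Matrix.trace_mul_cycle, hSnSh, Matrix.one_mul, hρtr]
    have hpt : ∀ i, 0 ≤ γ * hXh.eigenvalues i - hXh.eigenvalues i ^ q := by
      intro i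
      have he := hXev i
      have hle := hXle i
      have hq1 : (0:ℝ) ≤ q - 1 := by linarith
      have hsplit : hXh.eigenvalues i ^ q =
          hXh.eigenvalues i ^ (q - 1) * hXh.eigenvalues i := by
        rw [← Real.rpow_add_one he.ne' (q - 1), sub_add_cancel]
      have hmono : hXh.eigenvalues i ^ (q - 1) ≤ γ := by
        rw [hγ]
        exact Real.rpow_le_rpow he.le hle hq1
      rw [hsplit]
      nlinarith
    have h3 : (matCfc (fun x => γ * x - x ^ q) X).PosSemidef :=
      matCfc_posSemidef hXh hpt
    have h4 : matCfc (fun x => γ * x - x ^ q) X = (γ:ℂ) • X - Xq := by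
      have hsm : (γ:ℂ) • X = matCfc (fun x => γ * x) X := by
        conv_lhs => rw [← matCfc_id hXh]
        rw [matCfc_realSmul hXh]
        rfl
      rw [hsm, hXqc, matCfc_sub hXh]
    have h5 : 0 ≤ (σ * ((γ:ℂ) • X - Xq)).trace.re :=
      trace_mul_re_nonneg hσ.posSemidef (h4 ▸ h3)
    have h6 : (σ * ((γ:ℂ) • X - Xq)).trace = (γ:ℂ) * (σ * X).trace - (σ * Xq).trace := by
      rw [Matrix.mul_sub, Matrix.trace_sub, Matrix.mul_smul, Matrix.trace_smul]
      simp [smul_eq_mul]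
    have h7 : (σ * Xq).trace.re ≤ γ := by
      rw [h6, h2, mul_one] at h5
      simp only [Complex.sub_re, Complex.ofReal_re] at h5
      linarith
    have hpos : 0 < (Sh * Xq * Sh).trace.re := by
      have hXqpd : Xq.PosDef := by
        rw [hXqc]
        exact matCfc_posDef hXh fun i => Real.rpow_pos_of_pos (hXev i) q
      have h := posDef_conj hXqpd (fun x hx => mulVec_ne_zero hShU hx)
      rw [show Shᴴ = Sh from hShh] at h
      exact trace_re_pos_of_posDef h
    show (q - 1)⁻¹ * Real.log (Sh * Xq * Sh).trace.re ≤ t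
    have hTγ : (Sh * Xq * Sh).trace.re ≤ γ := by rw [h1]; exact h7
    have hlogT : Real.log (Sh * Xq * Sh).trace.re ≤ Real.log γ :=
      Real.log_le_log hpos hTγ
    have hlogγ : Real.log γ = (q - 1) * Real.log cc := by
      rw [hγ, Real.log_rpow hcc]
    have hq1ne : q - 1 ≠ 0 := by linarith
    calc (q - 1)⁻¹ * Real.log (Sh * Xq * Sh).trace.re
        ≤ (q - 1)⁻¹ * ((q - 1) * Real.log cc) := by
          apply mul_le_mul_of_nonneg_left _ (inv_nonneg.mpr (by linarith))
          rw [← hlogγ]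
          exact hlogT
      _ = Real.log cc := inv_mul_cancel_left₀ hq1ne _
      _ ≤ t := hlogcc
  · -- BS part
    rw [hNorm_eq, ← ht]
    show (ρAC * mlog Y).trace.re ≤ t
    have hmlog : mlog Y = matCfc Real.log Y := rfl
    have hpt : ∀ i, 0 ≤ Real.log cc - Real.log (hYh.eigenvalues i) := by
      intro i
      have := Real.log_le_log (hYev i) (hYle i)
      linarith
    have h3 : (matCfc (fun x => Real.log cc - Real.log x) Y).PosSemidef :=
      matCfc_posSemidef hYh hpt
    have h4 : matCfc (fun x => Real.log cc - Real.log x) Y =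
        (Real.log cc : ℂ) • 1 - mlog Y := by
      have hc1 : (Real.log cc : ℂ) • (1 : Matrix (a × c) (a × c) ℂ) =
          matCfc (fun _ => Real.log cc) Y := by
        rw [← matCfc_one hYh, matCfc_realSmul hYh]
        exact matCfc_congr hYh fun i => mul_one _
      rw [hc1, hmlog, matCfc_sub hYh]
    have h5 : 0 ≤ (ρAC * ((Real.log cc : ℂ) • 1 - mlog Y)).trace.re :=
      trace_mul_re_nonneg hρ.posSemidef (h4 ▸ h3)
    have h6 : (ρAC * ((Real.log cc : ℂ) • 1 - mlog Y)).trace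
        = (Real.log cc : ℂ) * ρAC.trace - (ρAC * mlog Y).trace := by
      rw [Matrix.mul_sub, Matrix.trace_sub, Matrix.mul_smul, Matrix.mul_one, Matrix.trace_smul]
      simp [smul_eq_mul]
    rw [h6, hρtr, mul_one] at h5
    simp only [Complex.sub_re, Complex.ofReal_re] at h5
    linarith


end Main

end QIT
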